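/- For every integer p ≥ 3 and every integer l ≥ 2, the following inequality of real numbers holds: 1 − (p^3−p^2+1)·(1/p)^l + (p^3−p^2)·((p^2−1)/p^3)^l ≥ 0.469. -/

import Mathlib

/-- Numerical bound used in the main theorem: for integers `p ≥ 3` and `l ≥ 2`,
`1 - (p^3-p^2+1)(1/p)^l + (p^3-p^2)((p^2-1)/p^3)^l ≥ 0.469`. -/
theorem numerator_lower_bound (p l : ℤ) (hp : 3 ≤ p) (hl : 2 ≤ l) :
    (0.469 : ℝ) ≤
      1 - ((p : ℝ) ^ 3 - (p : ℝ) ^ 2 + 1) * (1 / (p : ℝ)) ^ l +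
        ((p : ℝ) ^ 3 - (p : ℝ) ^ 2) * (((p : ℝ) ^ 2 - 1) / (p : ℝ) ^ 3) ^ l := by
  have hx3 : (3 : ℝ) ≤ (p : ℝ) := by exact_mod_cast hp
  have hx0 : (0 : ℝ) < (p : ℝ) := by linarith
  have hne : ((p : ℝ)) ≠ 0 := ne_of_gt hx0
  have hd : (0 : ℝ) ≤ (p : ℝ) - 3 := by linarith
  rcases eq_or_lt_of_le hl with h2 | h2
  · -- l = 2
    rw [← h2]
    have e : 1 - ((p : ℝ) ^ 3 - (p : ℝ) ^ 2 + 1) * (1 / (p : ℝ)) ^ (2:ℤ) +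
        ((p : ℝ) ^ 3 - (p : ℝ) ^ 2) * (((p : ℝ) ^ 2 - 1) / (p : ℝ) ^ 3) ^ (2:ℤ) =
        ((p:ℝ)^4 - 2*(p:ℝ)^3 + (p:ℝ)^2 + (p:ℝ) - 1) / (p:ℝ)^4 := by
      simp only [zpow_ofNat]
      field_simp
      ring
    rw [e, le_div_iff₀ (by positivity)]
    nlinarith [mul_nonneg (mul_nonneg (mul_nonneg hd hd) hd) hd,
      mul_nonneg (mul_nonneg hd hd) hd, mul_nonneg hd hd]
  · rcases eq_or_lt_of_le (Int.add_one_le_of_lt h2) with h3 | h3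
    · -- l = 3
      rw [← h3]
      have e : 1 - ((p : ℝ) ^ 3 - (p : ℝ) ^ 2 + 1) * (1 / (p : ℝ)) ^ (2+1:ℤ) +
          ((p : ℝ) ^ 3 - (p : ℝ) ^ 2) * (((p : ℝ) ^ 2 - 1) / (p : ℝ) ^ 3) ^ (2+1:ℤ) =
          ((p:ℝ)^7 - 3*(p:ℝ)^5 + 2*(p:ℝ)^4 + 3*(p:ℝ)^3 - 3*(p:ℝ)^2 - (p:ℝ) + 1) / (p:ℝ)^7 := by
        norm_num
        field_simp
        ring
      rw [e, le_div_iff₀ (by positivity)]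
      nlinarith [mul_nonneg (mul_nonneg (mul_nonneg hd hd) hd) hd,
        mul_nonneg (mul_nonneg hd hd) hd, mul_nonneg hd hd,
        mul_nonneg (mul_nonneg (mul_nonneg (mul_nonneg hd hd) hd) hd) hd,
        mul_nonneg (mul_nonneg (mul_nonneg (mul_nonneg (mul_nonneg hd hd) hd) hd) hd) hd,
        mul_nonneg (mul_nonneg (mul_nonneg (mul_nonneg (mul_nonneg (mul_nonneg hd hd) hd) hd) hd) hd) hd]
    · -- l ≥ 4
      set x : ℝ := (p : ℝ)
      have hl4 : (4 : ℤ) ≤ l := by omega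
      have hx1 : (1 : ℝ) ≤ x := by linarith
      have hb0 : (0 : ℝ) ≤ (x ^ 2 - 1) / x ^ 3 :=
        div_nonneg (by nlinarith) (by positivity)
      have hterm3 : (0 : ℝ) ≤ (x ^ 3 - x ^ 2) * ((x ^ 2 - 1) / x ^ 3) ^ l := by
        apply mul_nonneg
        · nlinarith
        · exact zpow_nonneg hb0 l
      have hpow : x ^ (4 : ℤ) ≤ x ^ l := zpow_le_zpow_right₀ hx1 hl4
      have hxl0 : (0 : ℝ) < x ^ l := zpow_pos hx0 l
      have hterm2 : (x ^ 3 - x ^ 2 + 1) * (1 / x) ^ l ≤ 1 / x := by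
        rw [one_div_zpow]
        have h1 : (x ^ 3 - x ^ 2 + 1) ≤ x ^ 3 := by nlinarith
        have h2' : (x ^ 3 - x ^ 2 + 1) / x ^ l ≤ x ^ 3 / x ^ (4 : ℤ) := by
          apply div_le_div₀ (by positivity) h1 (zpow_pos hx0 4) hpow
        calc (x ^ 3 - x ^ 2 + 1) * (1 / x ^ l) = (x ^ 3 - x ^ 2 + 1) / x ^ l := by ring
          _ ≤ x ^ 3 / x ^ (4 : ℤ) := h2'
          _ = 1 / x := by
              rw [show (4:ℤ) = ((4:ℕ):ℤ) by norm_num, zpow_natCast]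
              field_simp
      have hinv : 1 / x ≤ 1 / 3 := by
        rw [div_le_div_iff₀ hx0 (by norm_num)]; linarith
      nlinarith
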